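/- Let g be a finite-dimensional semisimple Lie algebra over ℂ and suppose the Lie algebra g₁ is a one-dimensional central extension of the Lie algebra g₂, i.e. there is a surjective homomorphism π : g₁ → g₂ with one-dimensional central kernel. Then there exists a subalgebra h₁ ⊆ g₁ of finite codimension and a surjective homomorphism h₁ → g if and only if there exists a subalgebra h₂ ⊆ g₂ of finite codimension and a surjective homomorphism h₂ → g. -/

import Mathlib

/-- Let `g` be a finite-dimensional semisimple complex Lie algebra and let `g₁` be a
one-dimensional central extension of `g₂`.  Then `g₁` has a subalgebra of finite
codimension surjecting onto `g` if and only if `g₂` does. -/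
theorem central_extension_subalgebra_surjection_iff
    (g : Type*) [LieRing g] [LieAlgebra ℂ g]
    [FiniteDimensional ℂ g] [LieAlgebra.IsSemisimple ℂ g]
    (g₁ : Type*) [LieRing g₁] [LieAlgebra ℂ g₁]
    (g₂ : Type*) [LieRing g₂] [LieAlgebra ℂ g₂]
    (π : g₁ →ₗ⁅ℂ⁆ g₂) (hsurj : Function.Surjective π)
    (hcentral : ∀ x ∈ π.ker, ∀ y : g₁, ⁅x, y⁆ = 0)
    (hdim : Module.finrank ℂ π.ker = 1) :
    (∃ h₁ : LieSubalgebra ℂ g₁, FiniteDimensional ℂ (g₁ ⧸ h₁.toSubmodule) ∧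
        ∃ f : h₁ →ₗ⁅ℂ⁆ g, Function.Surjective f) ↔
    (∃ h₂ : LieSubalgebra ℂ g₂, FiniteDimensional ℂ (g₂ ⧸ h₂.toSubmodule) ∧
        ∃ f : h₂ →ₗ⁅ℂ⁆ g, Function.Surjective f) := by
  constructor
  · rintro ⟨h₁, hfd, f, hf⟩
    refine ⟨h₁.map π, ?_, ?_⟩
    · -- quotient by image is a quotient of quotient by h₁
      have hle : h₁.toSubmodule ≤ ((h₁.map π).toSubmodule).comap π.toLinearMap := by
        intro x hx
        exact Submodule.mem_comap.mpr ⟨x, hx, rfl⟩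
      let q : (g₁ ⧸ h₁.toSubmodule) →ₗ[ℂ] (g₂ ⧸ (h₁.map π).toSubmodule) :=
        Submodule.mapQ _ _ π.toLinearMap hle
      have hq : Function.Surjective q := by
        intro y
        obtain ⟨z, rfl⟩ := Submodule.Quotient.mk_surjective _ y
        obtain ⟨x, rfl⟩ := hsurj z
        exact ⟨Submodule.Quotient.mk x, rfl⟩
      exact Module.Finite.of_surjective q hq
    · -- f kills ker π ∩ h₁ since image would be central in g
      have key : ∀ x : h₁, π (x : g₁) = 0 → f x = 0 := by
        intro x hx
        have hcen : ∀ w : g, ⁅f x, w⁆ = 0 := by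
          intro w
          obtain ⟨y, rfl⟩ := hf w
          have : ⁅x, y⁆ = (0 : h₁) := by
            ext
            exact hcentral _ (LieHom.mem_ker.mpr hx) _
          rw [← f.map_lie, this, map_zero f]
        have : f x ∈ LieAlgebra.center ℂ g := by
          rw [LieModule.mem_maxTrivSubmodule]
          intro w
          rw [← lie_skew, hcen, neg_zero]
        rwa [LieAlgebra.center_eq_bot, LieSubmodule.mem_bot] at this
      have key2 : ∀ x x' : h₁, π (x : g₁) = π (x' : g₁) → f x = f x' := by
        intro x x' h
        have : f (x - x') = 0 := by
          apply key
          simp [h]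
        rwa [map_sub f, sub_eq_zero] at this
      -- the restriction of π to h₁ surjects onto h₁.map π
      have hp : ∀ y : h₁.map π, ∃ x : h₁, π (x : g₁) = (y : g₂) := by
        rintro ⟨y, hy⟩
        obtain ⟨x, hx, hxy⟩ := (LieSubalgebra.mem_map π h₁ y).mp hy
        exact ⟨⟨x, hx⟩, hxy⟩
      choose sec hsec using hp
      have hsec' : ∀ x : h₁, ∀ hx : π (x : g₁) ∈ h₁.map π,
          f (sec ⟨π (x : g₁), hx⟩) = f x := by
        intro x hx
        exact key2 _ _ (by rw [hsec])
      refine ⟨{ toFun := fun y => f (sec y)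
                map_add' := ?_
                map_smul' := ?_
                map_lie' := ?_ }, ?_⟩
      · intro y z
        have h1 : π ((sec y + sec z : h₁) : g₁) = ((y + z : h₁.map π) : g₂) := by
          simp [hsec]
        have := key2 (sec (y + z)) (sec y + sec z) (by rw [hsec, h1])
        show f (sec (y + z)) = f (sec y) + f (sec z)
        rw [this, map_add f]
      · intro c y
        have h1 : π ((c • sec y : h₁) : g₁) = ((c • y : h₁.map π) : g₂) := by
          show π (c • ((sec y : h₁) : g₁)) = c • ((y : h₁.map π) : g₂)
          rw [map_smul π, hsec]
        have := key2 (sec (c • y)) (c • sec y) (by rw [hsec, h1])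
        show f (sec (c • y)) = c • f (sec y)
        rw [this, map_smul f]
      · intro y z
        have h1 : π ((⁅sec y, sec z⁆ : h₁) : g₁) = ((⁅y, z⁆ : h₁.map π) : g₂) := by
          have : ((⁅sec y, sec z⁆ : h₁) : g₁) = ⁅((sec y : h₁) : g₁), ((sec z : h₁) : g₁)⁆ := rfl
          rw [this, π.map_lie, hsec, hsec]
          rfl
        have := key2 (sec ⁅y, z⁆) ⁅sec y, sec z⁆ (by rw [hsec, h1])
        simp only [this, f.map_lie]
      · intro w
        obtain ⟨x, hx⟩ := hf w
        have hmem : π (x : g₁) ∈ h₁.map π := (LieSubalgebra.mem_map π h₁ _).mpr ⟨x, x.2, rfl⟩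
        refine ⟨⟨π (x : g₁), hmem⟩, ?_⟩
        simp only [LieHom.coe_mk]
        rw [hsec' x hmem, hx]
  · rintro ⟨h₂, hfd, f, hf⟩
    refine ⟨h₂.comap π, ?_, ?_⟩
    · -- quotient injects into g₂ ⧸ h₂
      have hle : (h₂.comap π).toSubmodule ≤ (h₂.toSubmodule).comap π.toLinearMap := le_rfl
      let q : (g₁ ⧸ (h₂.comap π).toSubmodule) →ₗ[ℂ] (g₂ ⧸ h₂.toSubmodule) :=
        Submodule.mapQ _ _ π.toLinearMap hle
      have hq : Function.Injective q := by
        rw [← LinearMap.ker_eq_bot, eq_bot_iff]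
        intro a ha
        obtain ⟨x, rfl⟩ := Submodule.Quotient.mk_surjective _ a
        rw [LinearMap.mem_ker, Submodule.mapQ_apply, Submodule.Quotient.mk_eq_zero] at ha
        rw [Submodule.mem_bot, Submodule.Quotient.mk_eq_zero]
        exact ha
      exact FiniteDimensional.of_injective q hq
    · -- compose f with the restriction of π
      let p : (h₂.comap π) →ₗ⁅ℂ⁆ h₂ :=
        { toFun := fun x => ⟨π (x : g₁), x.2⟩
          map_add' := by intro x y; ext; simp
          map_smul' := by
            intro c x
            ext
            show π (c • (x : g₁)) = c • π (x : g₁)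
            exact π.map_smul c _
          map_lie' := by intro x y; ext; exact π.map_lie _ _ }
      have hp : Function.Surjective p := by
        rintro ⟨y, hy⟩
        obtain ⟨x, rfl⟩ := hsurj y
        exact ⟨⟨x, hy⟩, rfl⟩
      exact ⟨f.comp p, hf.comp hp⟩
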